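/- Let C be a Grothendieck category with a Gabriel–Popescu embedding (U, Λ, S, Q). A right Λ-module M lies in the essential image of S (i.e. M ≅ S(C) for some object C of C) if and only if for every right Λ-module X with Q(X) = 0 one has Hom_Λ(X, M) = 0 and Ext¹_Λ(X, M) = 0. -/

import Mathlib

open CategoryTheory Limits Opposite

universe v u

/-- The module structure of Mathlib (Dec 2024) `moduleEndLeft`: `End X` (for `X : Cᵒᵖ`) acts on
`unop X ⟶ Y` by precomposition. -/
instance oldModuleEndLeft {C : Type u} [Category.{v} C] [Preadditive C] {X : Cᵒᵖ} {Y : C} :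
    Module (End X) (unop X ⟶ Y) where
  smul r f := r.unop ≫ f
  one_smul := Category.id_comp
  mul_smul _ _ _ := Category.assoc _ _ _
  smul_add _ _ _ := Preadditive.comp_add _ _ _ _ _ _
  smul_zero _ := Limits.comp_zero
  zero_smul _ := Limits.zero_comp
  add_smul _ _ _ := Preadditive.add_comp _ _ _ _ _ _

/-- The functor `preadditiveCoyonedaObj` of Mathlib (Dec 2024). -/
def oldPreadditiveCoyonedaObj {C : Type u} [Category.{v} C] [Preadditive C] (X : Cᵒᵖ) :
    C ⥤ ModuleCat.{v} (End X) where
  obj Y := ModuleCat.of _ (unop X ⟶ Y)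
  map f := ModuleCat.ofHom
    { toFun := fun g => g ≫ f
      map_add' := fun _ _ => Preadditive.add_comp _ _ _ _ _ _
      map_smul' := fun _ _ => Category.assoc _ _ _ }

/-- A Gabriel–Popescu embedding for a Grothendieck category `C`: a generator `U`,
the functor `S = Hom_C(U, -)` to right modules over `Λ = End U` (realized as
`preadditiveCoyonedaObj (op U) : C ⥤ ModuleCat (End (op U))`, where the module structure
on `U ⟶ X` is given by precomposition, i.e. the right `End U`-module structure),
together with a left adjoint `Q` of `S` which is exact, such that `S` is fully faithful. -/
structure GabrielPopescuEmbedding (C : Type u) [Category.{v} C] [Abelian C] where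
  U : C
  isSeparator : IsSeparator U
  Q : ModuleCat.{v} (End (op U)) ⥤ C
  adj : Q ⊣ oldPreadditiveCoyonedaObj (op U)
  qExact : PreservesFiniteLimits Q
  sFull : (oldPreadditiveCoyonedaObj (op U)).Full
  sFaithful : (oldPreadditiveCoyonedaObj (op U)).Faithful

instance oldPreadditiveCoyonedaObj_additive {C : Type u} [Category.{v} C] [Preadditive C]
    (X : Cᵒᵖ) : (oldPreadditiveCoyonedaObj X).Additive where
  map_add := by
    intros
    ext
    exact Preadditive.comp_add _ _ _ _ _ _

lemma GP.moduleCat_subsingleton_iff_isZero {R : Type*} [Ring R] (N : ModuleCat R) :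
    Subsingleton N ↔ IsZero N := by
  constructor
  · intro h; exact ModuleCat.isZero_of_subsingleton N
  · intro h
    rw [IsZero.iff_id_eq_zero] at h
    refine ⟨fun a b => ?_⟩
    calc a = (𝟙 N : N ⟶ N) a := rfl
    _ = (0 : N ⟶ N) a := by rw [h]
    _ = (𝟙 N : N ⟶ N) b := by rw [h]; rfl
    _ = b := rfl

section Aux

variable {A : Type*} [Category A] [Abelian A] [Linear ℤ A] [EnoughProjectives A]

/-- `Ext¹(X, M)` vanishes iff every `1`-cocycle on a given projective resolution of `X`
with values in `M` is a coboundary. -/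
lemma GP.ext_one_subsingleton_iff (X M : A) (P : ProjectiveResolution X) :
    Subsingleton (((Ext ℤ A 1).obj (op X)).obj M) ↔
      ∀ f : P.complex.X 1 ⟶ M, P.complex.d 2 1 ≫ f = 0 →
        ∃ g : P.complex.X 0 ⟶ M, P.complex.d 1 0 ≫ g = f := by
  let K := P.complex.linearYonedaObj ℤ M
  rw [GP.moduleCat_subsingleton_iff_isZero]
  have e := P.isoExt (R := ℤ) 1 M
  have : IsZero (((Ext ℤ A 1).obj (op X)).obj M) ↔ K.ExactAt 1 := by
    rw [HomologicalComplex.exactAt_iff_isZero_homology]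
    exact ⟨fun h => h.of_iso e.symm, fun h => h.of_iso e⟩
  rw [this]
  rw [HomologicalComplex.exactAt_iff' _ 0 1 2 (by simp) (by simp)]
  rw [ShortComplex.moduleCat_exact_iff]
  constructor
  · intro h f hf
    obtain ⟨g, hg⟩ := h f hf
    exact ⟨g, hg⟩
  · intro h f hf
    obtain ⟨g, hg⟩ := h f hf
    exact ⟨g, hg⟩

end Aux

section Adj

variable {D C : Type*} [Category D] [Category C] [Abelian D] [Abelian C]

/-- Any morphism from a module killed by `Q` to a module in the image of `S` is zero. -/
lemma GP.hom_eq_zero (Q : D ⥤ C) (S : C ⥤ D) (adj : Q ⊣ S) [S.Additive]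
    {X : D} (hX : IsZero (Q.obj X)) {c : C} (f : X ⟶ S.obj c) : f = 0 := by
  have h0 : (adj.homEquiv X c).symm f = 0 := hX.eq_of_src _ _
  have := congrArg (adj.homEquiv X c) h0
  rw [Equiv.apply_symm_apply] at this
  rw [this, Adjunction.homEquiv_unit, S.map_zero, comp_zero]

/-- The cocycle-extension lemma: a 1-cocycle with values in `S c` on a projective
resolution of `X` with `Q X = 0` is a coboundary. -/
lemma GP.exists_factor (Q : D ⥤ C) (S : C ⥤ D) (adj : Q ⊣ S) [PreservesFiniteLimits Q]
    [EnoughProjectives D]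
    {X : D} (hX : IsZero (Q.obj X)) (P : ProjectiveResolution X) (c : C)
    (f : P.complex.X 1 ⟶ S.obj c) (hf : P.complex.d 2 1 ≫ f = 0) :
    ∃ g : P.complex.X 0 ⟶ S.obj c, P.complex.d 1 0 ≫ g = f := by
  haveI : PreservesColimits Q := adj.leftAdjoint_preservesColimits
  haveI : PreservesFiniteColimits Q := PreservesColimits.preservesFiniteColimits Q
  haveI : Q.IsLeftAdjoint := adj.isLeftAdjoint
  -- the map `Q (P₁ → P₀)` is epi
  have hz : IsZero (Q.obj (((ChainComplex.single₀ D).obj X).X 0)) := hX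
  set SC1 := ShortComplex.mk (P.complex.d 1 0) (P.π.f 0) P.complex_d_comp_π_f_zero with hSC1def
  have hSC1 : SC1.Exact := ShortComplex.exact_of_g_is_cokernel _ P.isColimitCokernelCofork
  haveI hepi : Epi (Q.map (P.complex.d 1 0)) := by
    have hm := hSC1.map Q
    exact hm.epi_f (hz.eq_of_tgt _ _)
  -- exactness of `Q P₂ → Q P₁ → Q P₀`
  set SC2 := ShortComplex.mk (P.complex.d 2 1) (P.complex.d 1 0) (P.complex.d_comp_d 2 1 0)
    with hSC2def
  have hSC2 : SC2.Exact := P.exact_succ 0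
  have hmap : (SC2.map Q).Exact := hSC2.map Q
  -- transpose the cocycle along the adjunction and descend it
  have hf' : Q.map (P.complex.d 2 1) ≫ (adj.homEquiv _ c).symm f = 0 := by
    rw [← Adjunction.homEquiv_naturality_left_symm, hf]
    have : ((adj.homEquiv (P.complex.X 2) c).symm 0) = 0 := by
      rw [Adjunction.homEquiv_counit, Functor.map_zero, zero_comp]
    exact this
  haveI : Epi (SC2.map Q).g := hepi
  obtain ⟨h, hh⟩ := hmap.desc' ((adj.homEquiv _ c).symm f) hf'
  refine ⟨adj.homEquiv _ c h, ?_⟩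
  have := Adjunction.homEquiv_naturality_left adj (P.complex.d 1 0) h
  rw [← this]
  have : Q.map (P.complex.d 1 0) ≫ h = (adj.homEquiv (P.complex.X 1) c).symm f := hh
  rw [this, Equiv.apply_symm_apply]

/-- If every module killed by `Q` has no nonzero morphisms and no nontrivial extensions
into `M`, then the unit-like map `η : M ⟶ S (Q M)` is an isomorphism. -/
lemma GP.unit_isIso (Q : D ⥤ C) (S : C ⥤ D) (adj : Q ⊣ S) [PreservesFiniteLimits Q]
    [S.Additive] [Linear ℤ D] [EnoughProjectives D]
    (M : D) (η : M ⟶ S.obj (Q.obj M)) [IsIso (Q.map η)]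
    (h : ∀ X : D, IsZero (Q.obj X) →
      (∀ f : X ⟶ M, f = 0) ∧ Subsingleton (((Ext ℤ D 1).obj (op X)).obj M)) :
    IsIso η := by
  haveI : Q.IsLeftAdjoint := adj.isLeftAdjoint
  haveI : PreservesColimits Q := adj.leftAdjoint_preservesColimits
  -- the kernel of `η` is killed by `Q`, hence zero, hence `η` is mono
  have hK : IsZero (Q.obj (kernel η)) := by
    have h1 : IsZero (kernel (Q.map η)) :=
      IsZero.of_iso (isZero_zero _) (kernel.ofMono (Q.map η))
    exact IsZero.of_iso h1 (PreservesKernel.iso Q η)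
  haveI : Mono η := Abelian.mono_of_kernel_ι_eq_zero _ ((h _ hK).1 (kernel.ι η))
  -- the cokernel of `η` is killed by `Q`
  have hXc : IsZero (Q.obj (cokernel η)) := by
    have h1 : IsZero (cokernel (Q.map η)) :=
      IsZero.of_iso (isZero_zero _) (cokernel.ofEpi (Q.map η))
    exact IsZero.of_iso h1 (PreservesCokernel.iso Q η)
  -- a projective resolution of the cokernel
  have P : ProjectiveResolution (cokernel η) := ProjectiveResolution.of (cokernel η)
  have hsub := (h _ hXc).2
  rw [GP.ext_one_subsingleton_iff (cokernel η) M P] at hsub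
  -- `π₀ : P₀ ⟶ cokernel η`
  let π₀ : P.complex.X 0 ⟶ cokernel η := P.π.f 0
  haveI : Epi π₀ := by
    show Epi (P.π.f 0); infer_instance
  -- lift `π₀` through the epi `p : S Q M ⟶ cokernel η`
  let p : S.obj (Q.obj M) ⟶ cokernel η := cokernel.π η
  let α : P.complex.X 0 ⟶ S.obj (Q.obj M) := Projective.factorThru π₀ p
  have hα : α ≫ p = π₀ := Projective.factorThru_comp _ _
  -- `d₁ ≫ α` kills `p`, so it lifts to `M` through the mono `η`
  have hd10 : P.complex.d 1 0 ≫ π₀ = 0 := P.complex_d_comp_π_f_zero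
  have hda : (P.complex.d 1 0 ≫ α) ≫ p = 0 := by
    rw [Category.assoc, hα, hd10]
  have hSCη : (ShortComplex.mk η p (cokernel.condition η)).Exact :=
    ShortComplex.exact_of_g_is_cokernel _ (cokernelIsCokernel η)
  obtain ⟨β, hβ⟩ := hSCη.lift' (P.complex.d 1 0 ≫ α) hda
  -- `β` is a cocycle
  have hβd : P.complex.d 2 1 ≫ β = 0 := by
    rw [← cancel_mono η, Category.assoc, hβ, zero_comp, ← Category.assoc,
      P.complex.d_comp_d, zero_comp]
  -- hence a coboundary
  obtain ⟨γ, hγ⟩ := hsub β hβd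
  -- build a section of `p`
  have hφ : P.complex.d 1 0 ≫ (α - γ ≫ η) = 0 := by
    rw [Preadditive.comp_sub, ← Category.assoc, hγ, hβ, sub_self]
  obtain ⟨s, hs⟩ : ∃ s : cokernel η ⟶ S.obj (Q.obj M), π₀ ≫ s = α - γ ≫ η := by
    refine ⟨P.isColimitCokernelCofork.desc (CokernelCofork.ofπ _ hφ), ?_⟩
    exact Cofork.IsColimit.π_desc P.isColimitCokernelCofork
  have hsp : s ≫ p = 𝟙 (cokernel η) := by
    rw [← cancel_epi π₀, ← Category.assoc, hs, Preadditive.sub_comp, Category.assoc, hα]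
    simp [p, cokernel.condition]
  -- but `s = 0` by adjunction
  have hs0 : s = 0 := GP.hom_eq_zero Q S adj hXc s
  have hzero : IsZero (cokernel η) := by
    rw [IsZero.iff_id_eq_zero, ← hsp, hs0, zero_comp]
  -- so `η` is epi, hence an iso
  haveI : Epi η := Abelian.epi_of_cokernel_π_eq_zero _ (hzero.eq_of_tgt _ _)
  exact isIso_of_mono_of_epi η

end Adj

/-- For a Gabriel–Popescu embedding `(U, Λ, S, Q)` of a Grothendieck category `C`, a right
`Λ`-module `M` lies in the essential image of `S` iff `Hom_Λ(X, M) = 0` and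
`Ext¹_Λ(X, M) = 0` for every right `Λ`-module `X` with `Q X = 0`. -/
theorem stmt12 {C : Type u} [Category.{v} C] [Abelian C] [HasLimits C] [HasColimits C] [AB5 C]
    (E : GabrielPopescuEmbedding C) (M : ModuleCat.{v} (End (op E.U))) :
    (∃ c : C, Nonempty ((oldPreadditiveCoyonedaObj (op E.U)).obj c ≅ M)) ↔
      ∀ X : ModuleCat.{v} (End (op E.U)), IsZero (E.Q.obj X) →
        (∀ f : X ⟶ M, f = 0) ∧
        Subsingleton
          (((_root_.Ext ℤ (ModuleCat.{v} (End (op E.U))) 1).obj (Opposite.op X)).obj M) := by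
  haveI := E.sFull
  haveI := E.sFaithful
  haveI : PreservesFiniteLimits E.Q := E.qExact
  constructor
  · rintro ⟨c, ⟨e⟩⟩ X hX
    constructor
    · intro f
      have h0 : (f ≫ e.inv : X ⟶ (oldPreadditiveCoyonedaObj (op E.U)).obj c) = 0 :=
        GP.hom_eq_zero E.Q _ E.adj hX _
      calc f = (f ≫ e.inv) ≫ e.hom := by simp
      _ = 0 := by rw [h0, zero_comp]
    · have P : ProjectiveResolution X := ProjectiveResolution.of X
      rw [GP.ext_one_subsingleton_iff X M P]
      intro f hf
      obtain ⟨g, hg⟩ := GP.exists_factor E.Q _ E.adj hX P c (f ≫ e.inv)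
        (by rw [← Category.assoc, hf, zero_comp])
      exact ⟨g ≫ e.hom, by rw [← Category.assoc, hg, Category.assoc, Iso.inv_hom_id,
        Category.comp_id]⟩
  · intro h
    haveI : IsIso (E.Q.map (E.adj.unit.app M)) := by
      have ht : E.Q.map (E.adj.unit.app M) ≫ E.adj.counit.app (E.Q.obj M) = 𝟙 _ :=
        E.adj.left_triangle_components M
      have heq : E.Q.map (E.adj.unit.app M) = inv (E.adj.counit.app (E.Q.obj M)) :=
        IsIso.eq_inv_of_inv_hom_id ht
      rw [heq]
      infer_instance
    haveI : IsIso (E.adj.unit.app M) :=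
      GP.unit_isIso E.Q _ E.adj M (E.adj.unit.app M) h
    exact ⟨E.Q.obj M, ⟨(asIso (E.adj.unit.app M)).symm⟩⟩
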